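/- Let G be a locally compact group acting measurably and measure-preservingly on a probability space (X, m), and suppose the Koopman representation on L²₀(X) (functions of mean zero) has a spectral gap. If (vᵢ) is a sequence of nonnegative functions in L¹(X) with ‖vᵢ‖₁ = 1 that is asymptotically G-invariant in the L¹ sense, then vᵢ converges in L¹(X) to the constant function 1. -/

import Mathlib

open MeasureTheory
open scoped ENNReal

private lemma sqrt_sub_sq_le_abs {a b : ℝ} (ha : 0 ≤ a) (hb : 0 ≤ b) :
    (Real.sqrt a - Real.sqrt b) ^ 2 ≤ |a - b| := by
  have hsa := Real.sq_sqrt ha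
  have hsb := Real.sq_sqrt hb
  rcases le_total b a with h | h
  · have hs : Real.sqrt b ≤ Real.sqrt a := Real.sqrt_le_sqrt h
    rw [abs_of_nonneg (by linarith)]
    nlinarith [mul_le_mul_of_nonneg_left hs (Real.sqrt_nonneg b)]
  · have hs : Real.sqrt a ≤ Real.sqrt b := Real.sqrt_le_sqrt h
    rw [abs_of_nonpos (by linarith)]
    nlinarith [mul_le_mul_of_nonneg_left hs (Real.sqrt_nonneg a)]

private lemma eLpNorm_sqrt_sub_le {X : Type*} [MeasurableSpace X] (m : Measure X)
    {w u : X → ℝ} (hw : 0 ≤ᵐ[m] w) (hu : 0 ≤ᵐ[m] u) :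
    eLpNorm (fun x => Real.sqrt (w x) - Real.sqrt (u x)) 2 m
      ≤ (eLpNorm (fun x => w x - u x) 1 m) ^ (1 / 2 : ℝ) := by
  rw [eLpNorm_eq_lintegral_rpow_enorm_toReal (two_ne_zero) (ENNReal.ofNat_ne_top),
    eLpNorm_one_eq_lintegral_enorm]
  simp only [ENNReal.toReal_ofNat]
  refine ENNReal.rpow_le_rpow ?_ (by norm_num)
  refine lintegral_mono_ae ?_
  filter_upwards [hw, hu] with x hwx hux
  rw [Real.enorm_eq_ofReal_abs, Real.enorm_eq_ofReal_abs,
    ENNReal.ofReal_rpow_of_nonneg (abs_nonneg _) (by norm_num)]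
  refine ENNReal.ofReal_le_ofReal ?_
  rw [show |Real.sqrt (w x) - Real.sqrt (u x)| ^ (2 : ℝ)
      = (Real.sqrt (w x) - Real.sqrt (u x)) ^ 2 by
    rw [show ((2:ℝ)) = ((2:ℕ):ℝ) by norm_num, Real.rpow_natCast, sq_abs]]
  exact sqrt_sub_sq_le_abs hwx hux

private lemma eLpNorm_two_eq_sqrt_integral {X : Type*} [MeasurableSpace X] {m : Measure X}
    {g : X → ℝ} (hg : MemLp g 2 m) :
    eLpNorm g 2 m = ENNReal.ofReal (Real.sqrt (∫ x, g x ^ 2 ∂m)) := by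
  rw [eLpNorm_eq_lintegral_rpow_enorm_toReal (two_ne_zero) (ENNReal.ofNat_ne_top)]
  simp only [ENNReal.toReal_ofNat]
  have h1 : ∫⁻ x, ‖g x‖ₑ ^ (2 : ℝ) ∂m = ENNReal.ofReal (∫ x, g x ^ 2 ∂m) := by
    rw [ofReal_integral_eq_lintegral_ofReal hg.integrable_sq
      (Filter.Eventually.of_forall fun x => sq_nonneg _)]
    refine lintegral_congr fun x => ?_
    rw [Real.enorm_eq_ofReal_abs, ENNReal.ofReal_rpow_of_nonneg (abs_nonneg _) (by norm_num)]
    congr 1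
    rw [show ((2:ℝ)) = ((2:ℕ):ℝ) by norm_num, Real.rpow_natCast, sq_abs]
  rw [h1, ENNReal.ofReal_rpow_of_nonneg (integral_nonneg fun x => sq_nonneg _) (by norm_num),
    ← Real.sqrt_eq_rpow]

private lemma integral_sub_const_sq {X : Type*} [MeasurableSpace X] {m : Measure X}
    [IsProbabilityMeasure m] {g : X → ℝ} (hg : MemLp g 2 m) (c : ℝ) :
    ∫ x, (g x - c) ^ 2 ∂m = (∫ x, g x ^ 2 ∂m) - 2 * c * (∫ x, g x ∂m) + c ^ 2 := by
  have hgint : Integrable g m :=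
    memLp_one_iff_integrable.mp (hg.mono_exponent (by norm_num))
  have hsq : Integrable (fun x => g x ^ 2) m := hg.integrable_sq
  have hmul : Integrable (fun x => 2 * c * g x) m := hgint.const_mul _
  have hsub : Integrable (fun x => g x ^ 2 - 2 * c * g x) m := hsq.sub hmul
  have h : ∀ x, (g x - c) ^ 2 = g x ^ 2 - 2 * c * g x + c ^ 2 := fun x => by ring
  simp_rw [h]
  rw [integral_add hsub (integrable_const _), integral_sub hsq hmul, integral_const_mul,
    integral_const]
  simp [measure_univ]
theorem tendsto_one_of_asymptotically_invariant_L1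
    {G X : Type*} [Group G] [TopologicalSpace G] [IsTopologicalGroup G] [LocallyCompactSpace G]
    [MeasurableSpace X] (m : Measure X) [IsProbabilityMeasure m] [MulAction G X]
    (hmeas : ∀ g : G, Measurable fun x : X => g • x)
    (hpres : ∀ g : G, MeasurePreserving (fun x : X => g • x) m m)
    (hgap : ¬ ∃ f : ℕ → X → ℝ,
      (∀ n, MemLp (f n) 2 m) ∧ (∀ n, ∫ x, f n x ∂m = 0) ∧ (∀ n, eLpNorm (f n) 2 m = 1) ∧
        ∀ K : Set G, IsCompact K → ∀ ε : ℝ≥0∞, 0 < ε → ∀ᶠ n in Filter.atTop,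
          ∀ g ∈ K, eLpNorm (fun x => f n (g • x) - f n x) 2 m ≤ ε)
    (v : ℕ → X → ℝ)
    (hv1 : ∀ i, MemLp (v i) 1 m) (hv0 : ∀ i, 0 ≤ᵐ[m] v i)
    (hvn : ∀ i, eLpNorm (v i) 1 m = 1)
    (hvinv : ∀ K : Set G, IsCompact K → ∀ ε : ℝ≥0∞, 0 < ε → ∀ᶠ i in Filter.atTop,
      ∀ g ∈ K, eLpNorm (fun x => v i (g • x) - v i x) 1 m ≤ ε) :
    Filter.Tendsto (fun i => eLpNorm (fun x => v i x - 1) 1 m) Filter.atTop (nhds 0) := by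
  by_contra hcon
  rw [ENNReal.tendsto_nhds_zero] at hcon
  push_neg at hcon
  obtain ⟨ε, hεpos, hfreq⟩ := hcon
  have hminpos : (0:ℝ≥0∞) < min ε 1 := lt_min hεpos zero_lt_one
  have hminne : min ε 1 ≠ ⊤ := ne_top_of_le_ne_top ENNReal.one_ne_top (min_le_right _ _)
  set ε₀ : ℝ := (min ε 1).toReal with hε₀def
  have hε₀pos : 0 < ε₀ := ENNReal.toReal_pos hminpos.ne' hminne
  have hofR : ENNReal.ofReal ε₀ = min ε 1 := ENNReal.ofReal_toReal hminne
  obtain ⟨φ, hφ, hφP⟩ := Filter.extraction_of_frequently_atTop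
    (hfreq.mono fun i hi =>
      show ENNReal.ofReal ε₀ ≤ eLpNorm (fun x => v i x - 1) 1 m from
        (hofR ▸ min_le_left ε 1).trans hi.le)
  -- square roots
  set f : ℕ → X → ℝ := fun i x => Real.sqrt (v i x) with hfdef
  have hfm : ∀ i, AEStronglyMeasurable (f i) m := fun i =>
    Real.continuous_sqrt.comp_aestronglyMeasurable (hv1 i).aestronglyMeasurable
  have hsqv : ∀ i, (fun x => (f i x) ^ 2) =ᵐ[m] v i := fun i =>
    (hv0 i).mono fun x hx => Real.sq_sqrt hx
  have hintv : ∀ i, Integrable (v i) m := fun i => memLp_one_iff_integrable.mp (hv1 i)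
  have hvint1 : ∀ i, ∫ x, v i x ∂m = 1 := by
    intro i
    have h2 : ∫ x, ‖v i x‖ ∂m = ∫ x, v i x ∂m :=
      integral_congr_ae ((hv0 i).mono fun x hx => Real.norm_of_nonneg hx)
    have h1 : ENNReal.ofReal (∫ x, v i x ∂m) = 1 := by
      rw [← h2, ofReal_integral_norm_eq_lintegral_enorm (hintv i),
        ← eLpNorm_one_eq_lintegral_enorm, hvn i]
    exact ENNReal.ofReal_eq_one.mp h1
  have hfsqint : ∀ i, Integrable (fun x => (f i x) ^ 2) m := fun i => (hintv i).congr (hsqv i).symm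
  have hfLp : ∀ i, MemLp (f i) 2 m := fun i =>
    (memLp_two_iff_integrable_sq (hfm i)).mpr (hfsqint i)
  have hintsq : ∀ i, ∫ x, (f i x) ^ 2 ∂m = 1 := fun i => by
    rw [integral_congr_ae (hsqv i), hvint1 i]
  have hfint : ∀ i, Integrable (f i) m := fun i =>
    memLp_one_iff_integrable.mp ((hfLp i).mono_exponent (by norm_num))
  set c : ℕ → ℝ := fun i => ∫ x, f i x ∂m with hcdef
  have hc0 : ∀ i, 0 ≤ c i := fun i => integral_nonneg fun x => Real.sqrt_nonneg _
  have hc1 : ∀ i, c i ≤ 1 := by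
    intro i
    have hb : ∀ x, f i x ≤ (1 + f i x ^ 2) / 2 := fun x => by nlinarith [sq_nonneg (f i x - 1)]
    have hInt : Integrable (fun x => (1 + f i x ^ 2) / 2) m :=
      ((integrable_const (1:ℝ)).add (hfsqint i)).div_const _
    calc c i ≤ ∫ x, (1 + f i x ^ 2) / 2 ∂m := integral_mono (hfint i) hInt hb
      _ = 1 := by
        rw [integral_div, integral_add (integrable_const _) (hfsqint i), integral_const,
          hintsq i]
        simp [measure_univ]
  -- eLpNorm of f is 1
  have heLf : ∀ i, eLpNorm (f i) 2 m = 1 := fun i => by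
    rw [eLpNorm_two_eq_sqrt_integral (hfLp i), hintsq i, Real.sqrt_one, ENNReal.ofReal_one]
  -- key estimate: c i is bounded away from 1 along indices where v i is far from 1
  have hkey : ∀ i, ENNReal.ofReal ε₀ ≤ eLpNorm (fun x => v i x - 1) 1 m →
      c i ≤ 1 - ε₀ ^ 2 / 8 := by
    intro i hPi
    have hfac : (fun x => v i x - 1) =ᵐ[m] fun x => (f i x - 1) * (f i x + 1) := by
      filter_upwards [hsqv i] with x hx
      rw [← hx]; ring
    have hconj : Real.HolderConjugate 2 2 := by constructor <;> norm_num
    have hH : eLpNorm (fun x => v i x - 1) 1 m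
        ≤ eLpNorm (fun x => f i x - 1) 2 m * eLpNorm (fun x => f i x + 1) 2 m := by
      rw [eLpNorm_congr_ae hfac, eLpNorm_one_eq_lintegral_enorm,
        eLpNorm_eq_lintegral_rpow_enorm_toReal two_ne_zero ENNReal.ofNat_ne_top,
        eLpNorm_eq_lintegral_rpow_enorm_toReal two_ne_zero ENNReal.ofNat_ne_top]
      simp only [ENNReal.toReal_ofNat]
      have hmeas1 : AEMeasurable (fun x => ‖f i x - 1‖ₑ) m :=
        ((hfm i).sub aestronglyMeasurable_const).enorm
      have hmeas2 : AEMeasurable (fun x => ‖f i x + 1‖ₑ) m :=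
        ((hfm i).add aestronglyMeasurable_const).enorm
      have := ENNReal.lintegral_mul_le_Lp_mul_Lq m hconj hmeas1 hmeas2
      refine le_trans (le_of_eq ?_) this
      refine lintegral_congr fun x => ?_
      simp [enorm_mul]
    have hplus : eLpNorm (fun x => f i x + 1) 2 m ≤ 2 := by
      have h1 : eLpNorm (f i + fun _ => (1:ℝ)) 2 m
          ≤ eLpNorm (f i) 2 m + eLpNorm (fun _ => (1:ℝ)) 2 m :=
        eLpNorm_add_le (hfm i) aestronglyMeasurable_const one_le_two
      have h2 : eLpNorm (fun _ : X => (1:ℝ)) 2 m = 1 := by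
        rw [eLpNorm_const (1:ℝ) two_ne_zero (IsProbabilityMeasure.ne_zero m)]
        simp [measure_univ]
      calc eLpNorm (fun x => f i x + 1) 2 m = eLpNorm (f i + fun _ => (1:ℝ)) 2 m :=
            eLpNorm_congr_ae (Filter.Eventually.of_forall fun x => rfl)
        _ ≤ eLpNorm (f i) 2 m + eLpNorm (fun _ => (1:ℝ)) 2 m := h1
        _ = 2 := by rw [heLf i, h2]; norm_num
    have hsub : eLpNorm (fun x => f i x - 1) 2 m
        = ENNReal.ofReal (Real.sqrt (2 - 2 * c i)) := by
      have hLp : MemLp (fun x => f i x - (1:ℝ)) 2 m := (hfLp i).sub (memLp_const 1)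
      rw [eLpNorm_two_eq_sqrt_integral hLp]
      congr 2
      rw [integral_sub_const_sq (hfLp i) 1, hintsq i]
      simp [hcdef]; ring
    have hchain : ENNReal.ofReal ε₀ ≤ ENNReal.ofReal (Real.sqrt (2 - 2 * c i) * 2) := by
      calc ENNReal.ofReal ε₀ ≤ eLpNorm (fun x => v i x - 1) 1 m := hPi
        _ ≤ eLpNorm (fun x => f i x - 1) 2 m * eLpNorm (fun x => f i x + 1) 2 m := hH
        _ ≤ eLpNorm (fun x => f i x - 1) 2 m * 2 := mul_le_mul_right hplus _
        _ = ENNReal.ofReal (Real.sqrt (2 - 2 * c i) * 2) := by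
            rw [hsub, ← ENNReal.ofReal_ofNat 2, ← ENNReal.ofReal_mul (Real.sqrt_nonneg _)]
    have hre : ε₀ ≤ Real.sqrt (2 - 2 * c i) * 2 :=
      (ENNReal.ofReal_le_ofReal_iff (by positivity)).mp hchain
    have h2c : (0:ℝ) ≤ 2 - 2 * c i := by linarith [hc1 i]
    have hss := Real.sq_sqrt h2c
    nlinarith [Real.sqrt_nonneg (2 - 2 * c i), hε₀pos.le]
  set s : ℕ → ℝ := fun i => Real.sqrt (1 - c i ^ 2) with hsdef
  set s₀ : ℝ := Real.sqrt (ε₀ ^ 2 / 8) with hs₀def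
  have hs₀pos : 0 < s₀ := Real.sqrt_pos.mpr (by positivity)
  have hslow : ∀ i, ENNReal.ofReal ε₀ ≤ eLpNorm (fun x => v i x - 1) 1 m → s₀ ≤ s i := by
    intro i hPi
    have h1 := hkey i hPi
    refine Real.sqrt_le_sqrt ?_
    nlinarith [hc0 i, hc1 i, mul_nonneg (hc0 i) (by linarith [hc1 i] : (0:ℝ) ≤ 1 - c i)]
  have hvar : ∀ i, ∫ x, (f i x - c i) ^ 2 ∂m = 1 - c i ^ 2 := by
    intro i
    rw [integral_sub_const_sq (hfLp i) (c i), hintsq i]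
    simp [hcdef]; ring
  have hsn : ∀ n, 0 < s (φ n) := fun n => lt_of_lt_of_le hs₀pos (hslow _ (hφP n))
  have hsn0 : ∀ n, s₀ ≤ s (φ n) := fun n => hslow _ (hφP n)
  have hs2 : ∀ n, s (φ n) ^ 2 = 1 - c (φ n) ^ 2 := fun n =>
    Real.sq_sqrt (by nlinarith [hc0 (φ n), hc1 (φ n)])
  set F : ℕ → X → ℝ := fun n x => (s (φ n))⁻¹ * (f (φ n) x - c (φ n)) with hFdef
  have hFc : ∀ n, MemLp (fun x => f (φ n) x - c (φ n)) 2 m :=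
    fun n => (hfLp _).sub (memLp_const _)
  have hFLp : ∀ n, MemLp (F n) 2 m := fun n => (hFc n).const_mul _
  have hFzero : ∀ n, ∫ x, F n x ∂m = 0 := by
    intro n
    rw [hFdef]
    rw [integral_const_mul, integral_sub (hfint _) (integrable_const _), integral_const]
    simp [measure_univ, hcdef]
  have hFvar : ∀ n, ∫ x, F n x ^ 2 ∂m = 1 := by
    intro n
    have h1 : ∀ x, F n x ^ 2 = ((s (φ n))⁻¹) ^ 2 * (f (φ n) x - c (φ n)) ^ 2 := fun x => by
      rw [hFdef]; ring
    simp_rw [h1]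
    rw [integral_const_mul, hvar, ← hs2 n, inv_pow, inv_mul_cancel₀ (pow_ne_zero 2 (hsn n).ne')]
  have hFnorm : ∀ n, eLpNorm (F n) 2 m = 1 := by
    intro n
    rw [eLpNorm_two_eq_sqrt_integral (hFLp n), hFvar n, Real.sqrt_one, ENNReal.ofReal_one]
  refine hgap ⟨F, hFLp, hFzero, hFnorm, ?_⟩
  intro K hK ε' hε'
  set δ : ℝ≥0∞ := (ENNReal.ofReal s₀ * min ε' 1) ^ (2:ℝ) with hδdef
  have hbase_pos : 0 < ENNReal.ofReal s₀ * min ε' 1 :=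
    ENNReal.mul_pos (ENNReal.ofReal_pos.mpr hs₀pos).ne' (lt_min hε' zero_lt_one).ne'
  have hbase_ne : ENNReal.ofReal s₀ * min ε' 1 ≠ ⊤ :=
    ENNReal.mul_ne_top ENNReal.ofReal_ne_top
      (ne_top_of_le_ne_top ENNReal.one_ne_top (min_le_right _ _))
  have hδpos : 0 < δ := ENNReal.rpow_pos hbase_pos hbase_ne
  have hev2 : ∀ᶠ n in Filter.atTop, ∀ g ∈ K,
      eLpNorm (fun x => v (φ n) (g • x) - v (φ n) x) 1 m ≤ δ :=
    hφ.tendsto_atTop.eventually (hvinv K hK δ hδpos)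
  filter_upwards [hev2] with n hn g hg
  have hid : (fun x => F n (g • x) - F n x)
      = (s (φ n))⁻¹ • fun x => f (φ n) (g • x) - f (φ n) x := by
    funext x
    simp only [hFdef, Pi.smul_apply, smul_eq_mul]
    ring
  rw [hid, eLpNorm_const_smul]
  have hnn : 0 ≤ᵐ[m] fun x => v (φ n) (g • x) :=
    (hpres g).quasiMeasurePreserving.ae (hv0 (φ n))
  have hb := eLpNorm_sqrt_sub_le m hnn (hv0 (φ n))
  have hb2 : eLpNorm (fun x => f (φ n) (g • x) - f (φ n) x) 2 m ≤ δ ^ (1/2:ℝ) :=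
    le_trans hb (ENNReal.rpow_le_rpow (hn g hg) (by norm_num))
  have hδhalf : δ ^ (1/2:ℝ) = ENNReal.ofReal s₀ * min ε' 1 := by
    rw [hδdef, ← ENNReal.rpow_mul]
    norm_num
  have hcoe : ‖(s (φ n))⁻¹‖ₑ = ENNReal.ofReal (s (φ n))⁻¹ := by
    rw [Real.enorm_eq_ofReal_abs, abs_of_nonneg (inv_nonneg.mpr (hsn n).le)]
  calc ‖(s (φ n))⁻¹‖ₑ * eLpNorm (fun x => f (φ n) (g • x) - f (φ n) x) 2 m
      ≤ ‖(s (φ n))⁻¹‖ₑ * (ENNReal.ofReal s₀ * min ε' 1) := by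
        refine mul_le_mul_right ?_ _
        rw [← hδhalf]; exact hb2
    _ = (ENNReal.ofReal (s (φ n))⁻¹ * ENNReal.ofReal s₀) * min ε' 1 := by
        rw [hcoe, mul_assoc]
    _ ≤ 1 * min ε' 1 := by
        refine mul_le_mul_left ?_ _
        rw [← ENNReal.ofReal_mul (inv_nonneg.mpr (hsn n).le), ← ENNReal.ofReal_one]
        refine ENNReal.ofReal_le_ofReal ?_
        rw [show (s (φ n))⁻¹ * s₀ = s₀ / s (φ n) by ring, div_le_one (hsn n)]
        exact hsn0 n
    _ ≤ ε' := by simpa using min_le_left ε' 1
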